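/- arXiv:2311.09503 — 3 statements merged into one kernel-verified Lean document; each statement's English description precedes it below -/
import Mathlib

section
/- Let p be a prime and m ≥ 1. The map φ : (ℤ/pᵐℤ)³ → ker(SL₂(ℤ/p^{m+1}ℤ) → SL₂(ℤ/pℤ)) defined by φ(a,b,c) = I + p·[[a,b],[c,d]], where d = (1+pa)⁻¹(pbc − a) computed in ℤ/pᵐℤ, is a bijection. In particular, the kernel of the reduction map SL₂(ℤ/p^{m+1}ℤ) → SL₂(ℤ/pℤ) has exactly p^{3m} elements. -/
section PKB

variable (p m : ℕ)

private lemma pkb_cast_eq (hp : p.Prime) (x : ZMod (p ^ m)) :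
    (ZMod.cast x : ZMod (p ^ (m + 1))) = (x.val : ZMod (p ^ (m + 1))) := by
  haveI : NeZero (p ^ m) := ⟨pow_ne_zero _ hp.pos.ne'⟩
  rw [ZMod.natCast_val]

-- p * X = lift (π X)
private lemma pkb_keyA (hp : p.Prime) (X : ZMod (p ^ (m + 1))) :
    (p : ZMod (p ^ (m + 1))) * X =
      (p : ZMod (p ^ (m + 1))) *
        (ZMod.cast (ZMod.castHom (pow_dvd_pow p (Nat.le_succ m)) (ZMod (p ^ m)) X) :
          ZMod (p ^ (m + 1))) := by
  haveI : NeZero (p ^ m) := ⟨pow_ne_zero _ hp.pos.ne'⟩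
  haveI : NeZero (p ^ (m + 1)) := ⟨pow_ne_zero _ hp.pos.ne'⟩
  rw [pkb_cast_eq p m hp]
  have hv : (ZMod.castHom (pow_dvd_pow p (Nat.le_succ m)) (ZMod (p ^ m)) X).val
      = X.val % p ^ m := by
    rw [ZMod.castHom_apply, ← ZMod.natCast_val, ZMod.val_natCast]
  rw [hv]
  have hX : X = ((X.val : ℕ) : ZMod (p ^ (m + 1))) := by
    simp [ZMod.natCast_val, ZMod.cast_id]
  conv_lhs => rw [hX, ← Nat.div_add_mod X.val (p ^ m)]
  push_cast
  have h0 : (p : ZMod (p ^ (m + 1))) * (p : ZMod (p ^ (m + 1))) ^ m = 0 := by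
    have h := ZMod.natCast_self (p ^ (m + 1))
    push_cast at h
    rw [← h]; ring
  linear_combination ((X.val / p ^ m : ℕ) : ZMod (p ^ (m + 1))) * h0

end PKB

section PKB2
variable (p m : ℕ)

private lemma pkb_lift_inj (hp : p.Prime) :
    Function.Injective (fun x : ZMod (p ^ m) =>
      (p : ZMod (p ^ (m + 1))) * (ZMod.cast x : ZMod (p ^ (m + 1)))) := by
  haveI : NeZero (p ^ m) := ⟨pow_ne_zero _ hp.pos.ne'⟩
  haveI : NeZero (p ^ (m + 1)) := ⟨pow_ne_zero _ hp.pos.ne'⟩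
  intro x y h
  simp only [pkb_cast_eq p m hp] at h
  have h' : ((p * x.val : ℕ) : ZMod (p ^ (m + 1))) = ((p * y.val : ℕ) : ZMod (p ^ (m + 1))) := by
    push_cast; exact h
  rw [ZMod.natCast_eq_natCast_iff] at h'
  have hx : p * x.val < p ^ (m + 1) := by
    rw [pow_succ, mul_comm]
    exact Nat.mul_lt_mul_of_lt_of_le (ZMod.val_lt x) le_rfl hp.pos
  have hy : p * y.val < p ^ (m + 1) := by
    rw [pow_succ, mul_comm]
    exact Nat.mul_lt_mul_of_lt_of_le (ZMod.val_lt y) le_rfl hp.pos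
  have := h'
  unfold Nat.ModEq at this
  rw [Nat.mod_eq_of_lt hx, Nat.mod_eq_of_lt hy] at this
  have hval : x.val = y.val := Nat.eq_of_mul_eq_mul_left hp.pos this
  have := congrArg (fun t : ℕ => (t : ZMod (p ^ m))) hval
  simpa [ZMod.natCast_val, ZMod.cast_id] using this

private lemma pkb_lift_surj (hp : p.Prime) (X : ZMod (p ^ (m + 1)))
    (h : ZMod.castHom (dvd_pow_self p (Nat.succ_ne_zero m)) (ZMod p) X = 0) :
    ∃ x : ZMod (p ^ m), (p : ZMod (p ^ (m + 1))) * (ZMod.cast x : ZMod (p ^ (m + 1))) = X := by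
  haveI : NeZero (p ^ m) := ⟨pow_ne_zero _ hp.pos.ne'⟩
  haveI : NeZero (p ^ (m + 1)) := ⟨pow_ne_zero _ hp.pos.ne'⟩
  haveI : NeZero p := ⟨hp.pos.ne'⟩
  have hdvd : p ∣ X.val := by
    rwa [ZMod.castHom_apply, ← ZMod.natCast_val, ZMod.natCast_eq_zero_iff] at h
  obtain ⟨k, hk⟩ := hdvd
  have hklt : k < p ^ m := by
    by_contra hge
    push_neg at hge
    have : p ^ (m + 1) ≤ p * k := by
      rw [pow_succ, mul_comm (p ^ m) p]
      exact Nat.mul_le_mul_left p hge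
    have := lt_of_le_of_lt this (hk ▸ ZMod.val_lt X)
    omega
  refine ⟨(k : ZMod (p ^ m)), ?_⟩
  rw [pkb_cast_eq p m hp, ZMod.val_natCast, Nat.mod_eq_of_lt hklt]
  have : X = ((X.val : ℕ) : ZMod (p ^ (m + 1))) := by
    simp [ZMod.natCast_val, ZMod.cast_id]
  rw [this, hk]
  push_cast
  ring

private lemma pkb_piB (hp : p.Prime) (x : ZMod (p ^ m)) :
    (ZMod.castHom (pow_dvd_pow p (Nat.le_succ m)) (ZMod (p ^ m)))
      (ZMod.cast x : ZMod (p ^ (m + 1))) = x := by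
  haveI : NeZero (p ^ m) := ⟨pow_ne_zero _ hp.pos.ne'⟩
  rw [pkb_cast_eq p m hp, map_natCast, ZMod.natCast_val, ZMod.cast_id]

end PKB2

section PKBmain

/-- Let `p` be a prime and `m ≥ 1`.  The map
`φ(a,b,c) = I + p·[[a,b],[c,d]]` with `d = (1+pa)⁻¹(pbc − a)` computed in `ℤ/pᵐℤ`
is a bijection from `(ℤ/pᵐℤ)³` onto the kernel of the reduction map
`SL₂(ℤ/p^{m+1}ℤ) → SL₂(ℤ/pℤ)`; in particular that kernel has `p^{3m}` elements. -/
theorem planted_kernel_bijection (p m : ℕ) (hp : p.Prime) (hm : 1 ≤ m) :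
    let lift : ZMod (p ^ m) → ZMod (p ^ (m + 1)) :=
      fun x => (p : ZMod (p ^ (m + 1))) * (ZMod.cast x : ZMod (p ^ (m + 1)))
    let f : ZMod (p ^ m) × ZMod (p ^ m) × ZMod (p ^ m) →
        Matrix (Fin 2) (Fin 2) (ZMod (p ^ (m + 1))) := fun x =>
      let a := x.1
      let b := x.2.1
      let c := x.2.2
      let d : ZMod (p ^ m) := (1 + p * a)⁻¹ * (p * b * c - a)
      !![1 + lift a, lift b; lift c, 1 + lift d]
    let K : Set (Matrix (Fin 2) (Fin 2) (ZMod (p ^ (m + 1)))) :=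
      {M | M.det = 1 ∧
        M.map (ZMod.castHom (dvd_pow_self p (Nat.succ_ne_zero m)) (ZMod p)) = 1}
    Function.Injective f ∧ Set.range f = K ∧ Nat.card K = p ^ (3 * m) := by
  haveI : NeZero (p ^ m) := ⟨pow_ne_zero _ hp.pos.ne'⟩
  haveI : NeZero (p ^ (m + 1)) := ⟨pow_ne_zero _ hp.pos.ne'⟩
  intro lift f K
  have hlift : ∀ x : ZMod (p ^ m),
      lift x = (p : ZMod (p ^ (m + 1))) * (ZMod.cast x : ZMod (p ^ (m + 1))) := fun _ => rfl
  have hf : ∀ x : ZMod (p ^ m) × ZMod (p ^ m) × ZMod (p ^ m),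
      f x = !![1 + lift x.1, lift x.2.1; lift x.2.2,
        1 + lift ((1 + p * x.1)⁻¹ * (p * x.2.1 * x.2.2 - x.1))] := fun _ => rfl
  set π := ZMod.castHom (pow_dvd_pow p (Nat.le_succ m)) (ZMod (p ^ m)) with hπdef
  set ρ := ZMod.castHom (dvd_pow_self p (Nat.succ_ne_zero m)) (ZMod p) with hρdef
  -- key: p * X = lift (π X)
  have key : ∀ (X : ZMod (p ^ (m + 1))) (z : ZMod (p ^ m)), π X = z →
      (p : ZMod (p ^ (m + 1))) * X = lift z := by
    intro X z hz
    rw [hlift, pkb_keyA p m hp X, ← hπdef, hz]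
  have hpi := pkb_piB p m hp
  have hzero : lift 0 = 0 := by
    rw [hlift]
    simp
  have hadd : ∀ x y : ZMod (p ^ m), lift x + lift y = lift (x + y) := by
    intro x y
    rw [hlift x, hlift y, ← mul_add]
    exact key _ _ (by rw [map_add, hπdef, hpi, hpi])
  have hsub : ∀ x y : ZMod (p ^ m), lift x - lift y = lift (x - y) := by
    intro x y
    have := hadd (x - y) y
    rw [sub_add_cancel] at this
    rw [← this]; ring
  have hmul : ∀ x y : ZMod (p ^ m), lift x * (ZMod.cast y : ZMod (p ^ (m + 1))) = lift (x * y) := by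
    intro x y
    rw [hlift x, mul_assoc]
    exact key _ _ (by rw [map_mul, hπdef, hpi, hpi])
  have hmul2 : ∀ x y : ZMod (p ^ m),
      lift x * lift y = lift ((p : ZMod (p ^ m)) * (x * y)) := by
    intro x y
    have h1 : lift x * lift y = (p : ZMod (p ^ (m + 1))) * (lift x * ZMod.cast y) := by
      rw [hlift y]; ring
    rw [h1, hmul]
    refine key _ _ ?_
    rw [hlift, map_mul, map_natCast, hπdef, hpi]
  have hrho : ∀ x : ZMod (p ^ m), ρ (lift x) = 0 := by
    intro x
    rw [hlift, map_mul, map_natCast, ZMod.natCast_self, zero_mul]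
  have hdetf : ∀ a b c d : ZMod (p ^ m),
      Matrix.det !![1 + lift a, lift b; lift c, 1 + lift d] =
        1 + lift (a + d + p * (a * d) - p * (b * c)) := by
    intro a b c d
    rw [Matrix.det_fin_two_of]
    rw [show a + d + (p : ZMod (p ^ m)) * (a * d) - p * (b * c)
        = a + (d + ((p : ZMod (p ^ m)) * (a * d) - p * (b * c))) by ring,
      ← hadd, ← hadd, ← hsub, ← hmul2, ← hmul2]
    ring
  have hunit : ∀ a : ZMod (p ^ m), (1 + (p : ZMod (p ^ m)) * a) *
      (1 + (p : ZMod (p ^ m)) * a)⁻¹ = 1 := by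
    intro a
    refine ZMod.mul_inv_of_unit _ (IsNilpotent.isUnit_one_add ⟨m, ?_⟩)
    have hpm : ((p : ZMod (p ^ m))) ^ m = 0 := by
      have h := ZMod.natCast_self (p ^ m)
      push_cast at h
      exact h
    rw [mul_pow, hpm, zero_mul]
  have hsolve2 : ∀ a b c d' : ZMod (p ^ m),
      a + d' + p * (a * d') - p * (b * c) = 0 →
      d' = (1 + p * a)⁻¹ * (p * b * c - a) := by
    intro a b c d' h
    linear_combination (1 + (p : ZMod (p ^ m)) * a)⁻¹ * h - d' * hunit a
  have hsolve : ∀ a b c : ZMod (p ^ m),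
      a + ((1 + p * a)⁻¹ * (p * b * c - a)) +
        p * (a * ((1 + p * a)⁻¹ * (p * b * c - a))) - p * (b * c) = 0 := by
    intro a b c
    linear_combination ((p : ZMod (p ^ m)) * b * c - a) * hunit a
  have hliftinj : ∀ x y : ZMod (p ^ m), lift x = lift y → x = y := by
    intro x y h
    rw [hlift, hlift] at h
    exact pkb_lift_inj p m hp h
  have hinj : Function.Injective f := by
    intro x y hxy
    rw [hf, hf] at hxy
    have h00 := congrFun (congrFun hxy 0) 0
    have h01 := congrFun (congrFun hxy 0) 1
    have h10 := congrFun (congrFun hxy 1) 0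
    simp only [Matrix.of_apply, Matrix.cons_val', Matrix.cons_val_zero, Matrix.cons_val_one, Matrix.head_cons,
      Matrix.empty_val', Matrix.cons_val_fin_one, Matrix.head_fin_const] at h00 h01 h10
    have e1 : x.1 = y.1 := hliftinj _ _ (add_left_cancel h00)
    have e2 : x.2.1 = y.2.1 := hliftinj _ _ h01
    have e3 : x.2.2 = y.2.2 := hliftinj _ _ h10
    exact Prod.ext e1 (Prod.ext e2 e3)
  have hrange : Set.range f = K := by
    ext M
    simp only [Set.mem_range]
    constructor
    · rintro ⟨⟨a, b, c⟩, rfl⟩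
      rw [hf]
      constructor
      · rw [hdetf]
        rw [show a + (1 + ↑p * a)⁻¹ * (↑p * b * c - a)
            + (p : ZMod (p ^ m)) * (a * ((1 + ↑p * a)⁻¹ * (↑p * b * c - a)))
            - p * (b * c) = 0 from hsolve a b c, hzero, add_zero]
      · ext i j
        fin_cases i <;> fin_cases j <;>
          simp [Matrix.map_apply, hrho, Matrix.one_apply, map_add, map_one,
            -ZMod.castHom_apply] <;> exact hrho _
    · rintro ⟨hdet, hmap⟩
      have entry : ∀ i j, ρ (M i j) = (1 : Matrix (Fin 2) (Fin 2) (ZMod p)) i j := by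
        intro i j
        have := congrFun (congrFun hmap i) j
        rwa [Matrix.map_apply] at this
      have h00 : ρ (M 0 0 - 1) = 0 := by
        rw [map_sub, map_one, entry 0 0, Matrix.one_apply_eq, sub_self]
      have h01 : ρ (M 0 1) = 0 := by
        rw [entry 0 1]; simp [Matrix.one_apply]
      have h10 : ρ (M 1 0) = 0 := by
        rw [entry 1 0]; simp [Matrix.one_apply]
      have h11 : ρ (M 1 1 - 1) = 0 := by
        rw [map_sub, map_one, entry 1 1, Matrix.one_apply_eq, sub_self]
      obtain ⟨a, ha⟩ := pkb_lift_surj p m hp _ h00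
      obtain ⟨b, hb⟩ := pkb_lift_surj p m hp _ h01
      obtain ⟨c, hc⟩ := pkb_lift_surj p m hp _ h10
      obtain ⟨d', hd⟩ := pkb_lift_surj p m hp _ h11
      rw [← hlift] at ha hb hc hd
      have e0 : M 0 0 = 1 + lift a := by rw [ha]; ring
      have e1 : M 0 1 = lift b := hb.symm
      have e2 : M 1 0 = lift c := hc.symm
      have e3 : M 1 1 = 1 + lift d' := by rw [hd]; ring
      have hM : M = !![1 + lift a, lift b; lift c, 1 + lift d'] := by
        conv_lhs => rw [Matrix.eta_fin_two M]
        rw [e0, e1, e2, e3]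
      have hdet2 : 1 + lift (a + d' + p * (a * d') - p * (b * c)) = 1 + lift 0 := by
        rw [hzero, add_zero, ← hdetf, ← hM, hdet]
      have hE : a + d' + (p : ZMod (p ^ m)) * (a * d') - p * (b * c) = 0 :=
        hliftinj _ _ (add_left_cancel hdet2)
      have hd' : d' = (1 + p * a)⁻¹ * (p * b * c - a) := hsolve2 a b c d' hE
      exact ⟨(a, b, c), by rw [hf, hM, hd']⟩
  refine ⟨hinj, hrange, ?_⟩
  rw [← hrange, Nat.card_range_of_injective hinj, Nat.card_prod, Nat.card_prod,
    Nat.card_zmod, show 3 * m = m + (m + m) by ring, pow_add, pow_add]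

end PKBmain
end

section
/- Let A, B be Hermitian operators on a finite-dimensional Hilbert space with AB + BA = 0 and A² = B² = I, and let |ψ⟩ be a unit vector. Define ΔA² = ⟨ψ|A²|ψ⟩ − ⟨ψ|A|ψ⟩² and similarly ΔB². Then ΔA² + ΔB² ≥ 1. Equivalently, ⟨ψ|A|ψ⟩² + ⟨ψ|B|ψ⟩² ≤ 1. -/
open Matrix Complex

/-- Uncertainty principle for anticommuting involutions (pure states): if `A, B` are
Hermitian, `AB + BA = 0`, `A² = B² = I`, and `ψ` is a unit vector, then
`ΔA² + ΔB² ≥ 1`, equivalently `⟨ψ|A|ψ⟩² + ⟨ψ|B|ψ⟩² ≤ 1`. -/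
theorem uncertainty_pure (N : ℕ) (A B : Matrix (Fin N) (Fin N) ℂ)
    (hA : A.IsHermitian) (hB : B.IsHermitian)
    (hAB : A * B + B * A = 0) (hA2 : A * A = 1) (hB2 : B * B = 1)
    (ψ : Fin N → ℂ) (hψ : ∑ i, ‖ψ i‖ ^ 2 = 1) :
    ((dotProduct (star ψ) ((A * A).mulVec ψ)).re
        - (dotProduct (star ψ) (A.mulVec ψ)).re ^ 2)
      + ((dotProduct (star ψ) ((B * B).mulVec ψ)).re
        - (dotProduct (star ψ) (B.mulVec ψ)).re ^ 2) ≥ 1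
    ∧ (dotProduct (star ψ) (A.mulVec ψ)).re ^ 2
        + (dotProduct (star ψ) (B.mulVec ψ)).re ^ 2 ≤ 1 := by
  classical
  set a : ℝ := (dotProduct (star ψ) (A.mulVec ψ)).re with ha
  set b : ℝ := (dotProduct (star ψ) (B.mulVec ψ)).re with hb
  -- ψ has norm 1 w.r.t. complex dot product
  have hψψ : star ψ ⬝ᵥ ψ = 1 := by
    have h0 : star ψ ⬝ᵥ ψ = ((∑ i, ‖ψ i‖ ^ 2 : ℝ) : ℂ) := by
      push_cast
      simp [dotProduct, Complex.mul_conj', mul_comm, Complex.sq_norm,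
        ← Complex.normSq_eq_norm_sq, Complex.mul_conj]
    rw [h0, hψ]; norm_num
  -- hermitian expectation values are real
  have herm : ∀ (M : Matrix (Fin N) (Fin N) ℂ), M.IsHermitian →
      star ψ ⬝ᵥ M *ᵥ ψ = (((star ψ ⬝ᵥ M *ᵥ ψ).re : ℝ) : ℂ) := by
    intro M hM
    have h1 : star (star ψ ⬝ᵥ M *ᵥ ψ) = star ψ ⬝ᵥ M *ᵥ ψ := by
      rw [← Matrix.star_dotProduct_star, star_star, Matrix.star_mulVec, hM.eq,
        ← dotProduct_mulVec]
    exact (Complex.conj_eq_iff_re.mp h1).symm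
  have hAr := herm A hA
  have hBr := herm B hB
  -- the operator M = a A + b B
  set M : Matrix (Fin N) (Fin N) ℂ := (a : ℂ) • A + (b : ℂ) • B with hM
  have hMherm : M.IsHermitian := by
    show Mᴴ = M
    rw [hM]
    simp [Matrix.conjTranspose_add, Matrix.conjTranspose_smul, hA.eq, hB.eq,
      Complex.conj_ofReal]
  have hM2 : M * M = ((a^2 + b^2 : ℝ) : ℂ) • 1 := by
    have h1 : M * M = (a:ℂ)^2 • (A*A) + ((a:ℂ)*(b:ℂ)) • (A*B + B*A) + (b:ℂ)^2 • (B*B) := by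
      rw [hM]
      rw [add_mul, mul_add, mul_add, Matrix.smul_mul, Matrix.smul_mul, Matrix.smul_mul,
        Matrix.smul_mul, Matrix.mul_smul, Matrix.mul_smul, Matrix.mul_smul, Matrix.mul_smul,
        smul_smul, smul_smul, smul_smul, smul_smul, smul_add]
      module
    rw [h1, hA2, hB2, hAB]
    push_cast
    rw [smul_zero]
    module
  -- expectation of M
  have hexp : star ψ ⬝ᵥ M *ᵥ ψ = ((a^2 + b^2 : ℝ) : ℂ) := by
    rw [hM, Matrix.add_mulVec, dotProduct_add, Matrix.smul_mulVec,
      Matrix.smul_mulVec, dotProduct_smul, dotProduct_smul,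
      hAr, hBr, ← ha, ← hb]
    simp [smul_eq_mul]
    push_cast
    ring
  -- ⟨Mψ, Mψ⟩
  have hvv0 : star (M *ᵥ ψ) ⬝ᵥ (M *ᵥ ψ) = ((a^2 + b^2 : ℝ) : ℂ) := by
    rw [Matrix.star_mulVec, dotProduct_mulVec, Matrix.vecMul_vecMul,
      ← dotProduct_mulVec, hMherm.eq, hM2, Matrix.smul_mulVec,
      Matrix.one_mulVec, dotProduct_smul, hψψ]
    simp
  -- Cauchy-Schwarz in EuclideanSpace
  set ψ' : EuclideanSpace ℂ (Fin N) := (WithLp.equiv 2 _).symm ψ with hψ'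
  set v' : EuclideanSpace ℂ (Fin N) := (WithLp.equiv 2 _).symm (M *ᵥ ψ) with hv'
  have hinner : @inner ℂ _ _ ψ' v' = ((a^2 + b^2 : ℝ) : ℂ) := by
    rw [hψ', hv', WithLp.equiv_symm_apply, EuclideanSpace.inner_toLp_toLp, dotProduct_comm, hexp]
  have hvv : @inner ℂ _ _ v' v' = ((a^2 + b^2 : ℝ) : ℂ) := by
    rw [hv', WithLp.equiv_symm_apply, EuclideanSpace.inner_toLp_toLp, dotProduct_comm, hvv0]
  have hpp : @inner ℂ _ _ ψ' ψ' = (1 : ℂ) := by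
    rw [hψ', WithLp.equiv_symm_apply, EuclideanSpace.inner_toLp_toLp, dotProduct_comm, hψψ]
  have hcs := inner_mul_inner_self_le (𝕜 := ℂ) ψ' v'
  have hrev : @inner ℂ _ _ v' ψ' = starRingEnd ℂ (@inner ℂ _ _ ψ' v') := by
    rw [← inner_conj_symm]
  rw [hinner, hpp, hvv, hrev, hinner] at hcs
  simp only [Complex.norm_real, RingHom.map_one, Complex.one_re, one_mul,
    Complex.conj_ofReal, Complex.ofReal_re, Real.norm_eq_abs] at hcs
  have hs0 : 0 ≤ a^2 + b^2 := by positivity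
  rw [_root_.abs_of_nonneg hs0] at hcs
  simp only [RCLike.one_re, RCLike.ofReal_re, RCLike.re_to_complex, Complex.ofReal_re, one_mul] at hcs
  have hkey : a^2 + b^2 ≤ 1 := by nlinarith
  constructor
  · have e1 : (star ψ ⬝ᵥ (A * A) *ᵥ ψ).re = 1 := by
      rw [hA2, Matrix.one_mulVec, hψψ]; simp
    have e2 : (star ψ ⬝ᵥ (B * B) *ᵥ ψ).re = 1 := by
      rw [hB2, Matrix.one_mulVec, hψψ]; simp
    rw [e1, e2]; linarith
  · exact hkey
end

section
/- Let 𝒞 = CSS(C_X, C_Z) be a CSS code over 𝔽₂ of block length n, distance d, exhibiting (c₁, c₂, ε₀)-clustering. Fix ε' with 2ε' < ε₀, 4c₁ε' < c₂, and 2c₁ε'n < d. For y ∈ G_Z^{ε'} define the cluster Clust(y) = {y' ∈ G_Z^{ε'} : |y + y'|_{C_X^⊥} ≤ 2c₁ε'n}. Then: (1) the clusters form a partition of G_Z^{ε'}, i.e., for y, y' ∈ G_Z^{ε'}, either Clust(y) = Clust(y') or they are disjoint; (2) distinct clusters satisfy dis(Clust(y), Clust(y')) ≥ c₂n; (3) for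 c ∈ C_Z, Clust(y + c) = Clust(y) + c, and Clust(y + c) = Clust(y) if and only if c ∈ C_X^⊥. -/
variable {F : Type*} [Field F] [Fintype F] [DecidableEq F] {n : ℕ}

/-- The dual code of a set of vectors: all vectors orthogonal (under the standard
dot product) to every element of `S`. -/
def dualSet (S : Set (Fin n → F)) : Set (Fin n → F) :=
  {x | ∀ y ∈ S, dotProduct x y = 0}

/-- `|y|_C`: the minimum Hamming distance from `y` to an element of `S`. -/
noncomputable def distToCode (S : Set (Fin n → F)) (y : Fin n → F) : ℕ :=
  sInf ((fun c => hammingDist y c) '' S)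

namespace ClusterAux

lemma add_self (a : Fin n → ZMod 2) : a + a = 0 := by
  funext i; exact CharTwo.add_self_eq_zero _

lemma dist_norm (a b : Fin n → ZMod 2) : hammingDist a b = hammingNorm (a + b) := by
  rw [hammingDist_eq_hammingNorm]
  congr 1
  funext i
  simp [sub_eq_add_neg, CharTwo.neg_eq]

lemma norm_add_le {m : ℕ} (a b : Fin m → ZMod 2) :
    hammingNorm (a + b) ≤ hammingNorm a + hammingNorm b := by
  have h := hammingDist_triangle (a + b) b 0
  rw [hammingDist_zero_right, hammingDist_zero_right, dist_norm] at h
  have : a + b + b = a := by rw [add_assoc, add_self, add_zero]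
  rw [this] at h
  omega

lemma distToCode_le {S : Set (Fin n → ZMod 2)} {c : Fin n → ZMod 2} (hc : c ∈ S)
    (y : Fin n → ZMod 2) : distToCode S y ≤ hammingDist y c :=
  Nat.sInf_le ⟨c, hc, rfl⟩

lemma distToCode_exists {S : Set (Fin n → ZMod 2)} (hS : S.Nonempty) (y : Fin n → ZMod 2) :
    ∃ c ∈ S, distToCode S y = hammingDist y c := by
  obtain ⟨c, hc, h⟩ := Nat.sInf_mem (hS.image (fun c => hammingDist y c))
  exact ⟨c, hc, h.symm⟩

lemma distToCode_le_norm {S : Set (Fin n → ZMod 2)} (h0 : (0 : Fin n → ZMod 2) ∈ S)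
    (y : Fin n → ZMod 2) : distToCode S y ≤ hammingNorm y := by
  have := distToCode_le h0 y
  rwa [hammingDist_zero_right] at this

lemma distToCode_triangle {S : Set (Fin n → ZMod 2)}
    (hadd : ∀ a ∈ S, ∀ b ∈ S, a + b ∈ S) (h0 : (0 : Fin n → ZMod 2) ∈ S)
    (a b : Fin n → ZMod 2) :
    distToCode S (a + b) ≤ distToCode S a + distToCode S b := by
  obtain ⟨c, hc, hc'⟩ := distToCode_exists ⟨0, h0⟩ a
  obtain ⟨c', hc2, hc2'⟩ := distToCode_exists ⟨0, h0⟩ b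
  have hle := distToCode_le (hadd c hc c' hc2) (a + b)
  have : hammingDist (a + b) (c + c') ≤ hammingDist a c + hammingDist b c' := by
    rw [dist_norm, dist_norm, dist_norm]
    have heq : a + b + (c + c') = (a + c) + (b + c') := by abel
    rw [heq]
    exact norm_add_le _ _
  omega

lemma distToCode_shift {S : Set (Fin n → ZMod 2)}
    (hadd : ∀ a ∈ S, ∀ b ∈ S, a + b ∈ S) (h0 : (0 : Fin n → ZMod 2) ∈ S)
    {c : Fin n → ZMod 2} (hc : c ∈ S) (y : Fin n → ZMod 2) :
    distToCode S (y + c) = distToCode S y := by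
  have key : ∀ z : Fin n → ZMod 2, ∀ e ∈ S, distToCode S (z + e) ≤ distToCode S z := by
    intro z e he
    obtain ⟨c', hc', h'⟩ := distToCode_exists ⟨0, h0⟩ z
    have hle := distToCode_le (hadd c' hc' e he) (z + e)
    have : hammingDist (z + e) (c' + e) = hammingDist z c' := by
      rw [dist_norm, dist_norm]
      congr 1
      rw [show z + e + (c' + e) = z + c' + (e + e) by abel, add_self, add_zero]
    omega
  have h1 := key y c hc
  have h2 := key (y + c) c hc
  rw [add_assoc, add_self, add_zero] at h2
  omega

lemma distToCode_zero {S : Set (Fin n → ZMod 2)} (h0 : (0 : Fin n → ZMod 2) ∈ S) :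
    distToCode S (0 : Fin n → ZMod 2) = 0 := by
  have := distToCode_le_norm h0 (0 : Fin n → ZMod 2)
  simpa using this

end ClusterAux

open ClusterAux in
/-- Clustering lemma for approximate-codeword clusters: under `(c₁,c₂,ε₀)`-clustering
and suitable smallness of `ε'`, the clusters `Clust(y)` for `y ∈ G_Z^{ε'}` form a
partition of `G_Z^{ε'}`, distinct clusters are at Hamming distance `≥ c₂n`, and for
`c ∈ C_Z` one has `Clust(y+c) = Clust(y)+c`, with `Clust(y+c) = Clust(y)` iff
`c ∈ C_X^⊥`. -/
theorem cluster_partition {mX mZ : ℕ}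
    (HX : Matrix (Fin mX) (Fin n) (ZMod 2)) (HZ : Matrix (Fin mZ) (Fin n) (ZMod 2))
    (hCSS : dualSet {y | HX.mulVec y = 0} ⊆ {y | HZ.mulVec y = 0})
    (c₁ c₂ ε₀ : ℝ) (hc₁ : 0 < c₁) (hc₂ : 0 < c₂) (hε₀ : 0 < ε₀)
    (D : Set (Fin n → ZMod 2)) (hD : D = dualSet {y | HX.mulVec y = 0})
    (hclust : ∀ ε : ℝ, 0 < ε → ε < ε₀ → ∀ y : Fin n → ZMod 2,
      (hammingNorm (HZ.mulVec y) : ℝ) ≤ ε * mZ →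
      (distToCode D y : ℝ) ≤ c₁ * ε * n ∨ (distToCode D y : ℝ) ≥ c₂ * n)
    (d : ℕ) (hdist : ∀ c : Fin n → ZMod 2, HZ.mulVec c = 0 → c ∉ D → d ≤ distToCode D c)
    (ε' : ℝ) (hε' : 0 < ε') (h1 : 2 * ε' < ε₀) (h2 : 4 * c₁ * ε' < c₂)
    (h3 : 2 * c₁ * ε' * n < (d : ℝ))
    (G : Set (Fin n → ZMod 2))
    (hG : G = {y | (hammingNorm (HZ.mulVec y) : ℝ) ≤ ε' * mZ})
    (Clust : (Fin n → ZMod 2) → Set (Fin n → ZMod 2))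
    (hClust : ∀ y, Clust y = {y' ∈ G | (distToCode D (y + y') : ℝ) ≤ 2 * c₁ * ε' * n}) :
    (∀ y ∈ G, ∀ y' ∈ G, Clust y = Clust y' ∨ Disjoint (Clust y) (Clust y')) ∧
    (∀ y ∈ G, ∀ y' ∈ G, Clust y ≠ Clust y' →
      ∀ a ∈ Clust y, ∀ b ∈ Clust y', c₂ * n ≤ (hammingDist a b : ℝ)) ∧
    (∀ y ∈ G, ∀ c : Fin n → ZMod 2, HZ.mulVec c = 0 →
      Clust (y + c) = (fun u => u + c) '' Clust y ∧ (Clust (y + c) = Clust y ↔ c ∈ D)) := by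
  -- basic properties of D
  have hD0 : (0 : Fin n → ZMod 2) ∈ D := by
    rw [hD]; intro y _; simp [dotProduct]
  have hDadd : ∀ a ∈ D, ∀ b ∈ D, a + b ∈ D := by
    rw [hD]; intro a ha b hb y hy
    have := ha y hy; have := hb y hy
    simp [add_dotProduct, *]
  -- membership in G
  have hGmem : ∀ y, y ∈ G ↔ (hammingNorm (HZ.mulVec y) : ℝ) ≤ ε' * mZ := by
    intro y; rw [hG]; rfl
  have hGadd : ∀ a ∈ G, ∀ b, HZ.mulVec a = HZ.mulVec b → b ∈ G := by
    intro a ha b hab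
    rw [hGmem] at ha ⊢; rwa [← hab]
  -- the key dichotomy for sums of two elements of G
  have key : ∀ a ∈ G, ∀ b ∈ G, (distToCode D (a + b) : ℝ) ≤ 2 * c₁ * ε' * n ∨
      (distToCode D (a + b) : ℝ) ≥ c₂ * n := by
    intro a ha b hb
    rw [hGmem] at ha hb
    have hnorm : (hammingNorm (HZ.mulVec (a + b)) : ℝ) ≤ (2 * ε') * mZ := by
      rw [Matrix.mulVec_add]
      have := norm_add_le (HZ.mulVec a) (HZ.mulVec b)
      have hcast : (hammingNorm (HZ.mulVec a + HZ.mulVec b) : ℝ) ≤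
          (hammingNorm (HZ.mulVec a) : ℝ) + (hammingNorm (HZ.mulVec b) : ℝ) := by
        exact_mod_cast this
      linarith
    have := hclust (2 * ε') (by linarith) h1 (a + b) hnorm
    rcases this with h | h
    · left; calc (distToCode D (a + b) : ℝ) ≤ c₁ * (2 * ε') * n := h
        _ = 2 * c₁ * ε' * n := by ring
    · right; exact h
  -- the similarity relation and its properties
  set B : ℝ := 2 * c₁ * ε' * n with hB
  have hB0 : 0 ≤ B := by
    have : (0:ℝ) ≤ c₁ * ε' * n := by positivity
    rw [hB]; linarith
  have hmem : ∀ y y', y' ∈ Clust y ↔ y' ∈ G ∧ (distToCode D (y + y') : ℝ) ≤ B := by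
    intro y y'; rw [hClust]; rfl
  have hsymm : ∀ a b : Fin n → ZMod 2, distToCode D (a + b) = distToCode D (b + a) := by
    intro a b; rw [add_comm]
  have htrans : ∀ a ∈ G, ∀ b ∈ G, ∀ c ∈ G,
      (distToCode D (a + b) : ℝ) ≤ B → (distToCode D (b + c) : ℝ) ≤ B →
      (distToCode D (a + c) : ℝ) ≤ B := by
    intro a ha b hb c hc hab hbc
    have htri : distToCode D (a + c) ≤ distToCode D (a + b) + distToCode D (b + c) := by
      have heq : a + c = (a + b) + (b + c) := by
        rw [show (a + b) + (b + c) = a + (b + b) + c by abel, add_self, add_zero]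
      rw [heq]; exact distToCode_triangle hDadd hD0 _ _
    have hle : (distToCode D (a + c) : ℝ) ≤ 2 * B := by
      have : (distToCode D (a + c) : ℝ) ≤
          (distToCode D (a + b) : ℝ) + (distToCode D (b + c) : ℝ) := by exact_mod_cast htri
      linarith
    rcases key a ha c hc with h | h
    · exact h
    · by_cases hn : 0 < (n : ℝ)
      · exfalso
        have hmul := mul_lt_mul_of_pos_right h2 hn
        linarith
      · push_neg at hn
        have hn0 : (n : ℝ) = 0 := le_antisymm hn (Nat.cast_nonneg n)
        rw [hB, hn0] at hle ⊢
        linarith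
  have hrefl : ∀ a : Fin n → ZMod 2, (distToCode D (a + a) : ℝ) ≤ B := by
    intro a
    rw [add_self, distToCode_zero hD0]
    simpa using hB0
  have hself : ∀ y ∈ G, y ∈ Clust y := by
    intro y hy; rw [hmem]; exact ⟨hy, hrefl y⟩
  -- if y ~ y' then the clusters agree
  have hsame : ∀ y ∈ G, ∀ y' ∈ G, (distToCode D (y + y') : ℝ) ≤ B → Clust y = Clust y' := by
    intro y hy y' hy' hyy'
    ext z
    rw [hmem, hmem]
    constructor
    · rintro ⟨hz, hz2⟩
      refine ⟨hz, htrans y' hy' y hy z hz ?_ hz2⟩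
      rw [← hsymm]; exact hyy'
    · rintro ⟨hz, hz2⟩
      exact ⟨hz, htrans y hy y' hy' z hz hyy' hz2⟩
  refine ⟨?_, ?_, ?_⟩
  · -- partition
    intro y hy y' hy'
    by_cases hc : (distToCode D (y + y') : ℝ) ≤ B
    · exact Or.inl (hsame y hy y' hy' hc)
    · right
      rw [Set.disjoint_left]
      intro z hz hz'
      rw [hmem] at hz hz'
      exact hc (htrans y hy z hz.1 y' hy' hz.2 (by rw [hsymm]; exact hz'.2))
  · -- distance between distinct clusters
    intro y hy y' hy' hne a ha b hb
    have hzG := (hmem y a).mp ha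
    have hbG := (hmem y' b).mp hb
    have hnab : ¬ (distToCode D (a + b) : ℝ) ≤ B := by
      intro hab
      apply hne
      apply hsame y hy y' hy'
      have h1' : (distToCode D (y + b) : ℝ) ≤ B :=
        htrans y hy a hzG.1 b hbG.1 hzG.2 hab
      exact htrans y hy b hbG.1 y' hy' h1' (by rw [hsymm]; exact hbG.2)
    rcases key a hzG.1 b hbG.1 with h | h
    · exact absurd h hnab
    · have hle : distToCode D (a + b) ≤ hammingDist a b := by
        rw [dist_norm]; exact distToCode_le_norm hD0 _
      have : (distToCode D (a + b) : ℝ) ≤ (hammingDist a b : ℝ) := by exact_mod_cast hle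
      linarith
  · -- compatibility with C_Z translations
    intro y hy c hcZ
    have hGc : ∀ z : Fin n → ZMod 2, z ∈ G ↔ z + c ∈ G := by
      intro z
      have hzc : HZ.mulVec (z + c) = HZ.mulVec z := by
        rw [Matrix.mulVec_add, hcZ, add_zero]
      rw [hGmem, hGmem, hzc]
    constructor
    · ext z
      rw [hmem]
      constructor
      · rintro ⟨hz, hz2⟩
        refine ⟨z + c, ?_, by show z + c + c = z; rw [add_assoc, add_self, add_zero]⟩
        rw [hmem]
        refine ⟨(hGc z).mp hz, ?_⟩
        have : y + (z + c) = y + c + z := by abel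
        rwa [this]
      · rintro ⟨u, hu, rfl⟩
        rw [hmem] at hu
        refine ⟨(hGc u).mp hu.1, ?_⟩
        have : y + c + (u + c) = y + u := by
          rw [show y + c + (u + c) = y + u + (c + c) by abel, add_self, add_zero]
        rw [this]; exact hu.2
    · constructor
      · intro heq
        by_contra hcD
        have hycG : y + c ∈ G := (hGc y).mp hy
        have : y ∈ Clust (y + c) := heq ▸ hself y hy
        rw [hmem] at this
        have hcc : y + c + y = c := by
          rw [show y + c + y = c + (y + y) by abel, add_self, add_zero]
        rw [hcc] at this
        have hd : d ≤ distToCode D c := hdist c hcZ hcD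
        have : (d : ℝ) ≤ B := le_trans (by exact_mod_cast hd) this.2
        rw [hB] at this
        linarith
      · intro hcD
        apply hsame (y + c) ((hGc y).mp hy) y hy
        have : y + c + y = c := by
          rw [show y + c + y = c + (y + y) by abel, add_self, add_zero]
        rw [this]
        have hle := distToCode_le_norm hD0 c
        have h0 : distToCode D c = 0 := by
          obtain ⟨c', hc', h'⟩ := distToCode_exists ⟨0, hD0⟩ c
          have := distToCode_le hcD c
          simpa using this
        rw [h0]
        simpa using hB0
end
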